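/- The function F(ρ) = (π/√18)(3 − 4ρ(ρ−1))√(ρ(ρ−1)) + (π/√8)·arcsec(1 − 2ρ) is strictly monotonically decreasing for ρ ≥ 1, satisfies F(1) = π²/(2√2), and F(ρ) → −∞ as ρ → ∞. -/

import Mathlib

open Real Filter

/-- The inverse secant function: `arcsec x = arccos (1/x)`. -/
noncomputable def arcsec (x : ℝ) : ℝ := Real.arccos x⁻¹

/-- The needle-energy function
`F(ρ) = (π/√18)(3 − 4ρ(ρ−1))√(ρ(ρ−1)) + (π/√8) arcsec(1 − 2ρ)`. -/
noncomputable def F (ρ : ℝ) : ℝ :=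
  π / Real.sqrt 18 * (3 - 4 * ρ * (ρ - 1)) * Real.sqrt (ρ * (ρ - 1)) +
    π / Real.sqrt 8 * arcsec (1 - 2 * ρ)

lemma sqrt18' : Real.sqrt 18 = 3 * Real.sqrt 2 := by
  rw [show (18:ℝ) = 3^2 * 2 by norm_num, Real.sqrt_mul (by positivity), Real.sqrt_sq (by norm_num)]

lemma sqrt8' : Real.sqrt 8 = 2 * Real.sqrt 2 := by
  rw [show (8:ℝ) = 2^2 * 2 by norm_num, Real.sqrt_mul (by positivity), Real.sqrt_sq (by norm_num)]

lemma F_deriv' (ρ : ℝ) (hρ : 1 < ρ) :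
    HasDerivAt F (-(4 * Real.sqrt 2 * π * Real.sqrt (ρ*(ρ-1)) ^ 3 / (2*ρ-1))) ρ := by
  have hu : 0 < ρ * (ρ - 1) := by nlinarith
  set s := Real.sqrt (ρ*(ρ-1)) with hs_def
  have hs_pos : 0 < s := Real.sqrt_pos.mpr hu
  have hs2 : s ^ 2 = ρ * (ρ - 1) := Real.sq_sqrt hu.le
  have h21 : (0:ℝ) < 2*ρ-1 := by linarith
  have hvne : (1 - 2*ρ) ≠ 0 := by linarith
  have hw1 : (1 - 2*ρ)⁻¹ ≠ -1 := by
    intro h; have : (1 - 2*ρ) = -1 := by field_simp at h; linarith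
    linarith
  have hw2 : (1 - 2*ρ)⁻¹ ≠ 1 := by
    intro h; have : (1 - 2*ρ) = 1 := by field_simp at h; linarith
    linarith
  have hsw : Real.sqrt (1 - ((1 - 2*ρ)⁻¹) ^ 2) = 2 * s / (2*ρ-1) := by
    rw [show (1 - ((1 - 2*ρ)⁻¹) ^ 2) = (2 * s / (2*ρ-1))^2 by
      field_simp; ring_nf; nlinarith [hs2]]
    exact Real.sqrt_sq (by positivity)
  have hu' : HasDerivAt (fun x : ℝ => x * (x - 1)) (2*ρ - 1) ρ := by
    have h := (hasDerivAt_id ρ).mul ((hasDerivAt_id ρ).sub_const 1)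
    simp only [id_eq, one_mul, mul_one] at h
    exact h.congr_deriv (by ring)
  have hFG : F = fun x => π / Real.sqrt 18 * ((3 - 4*(x*(x-1))) * Real.sqrt (x*(x-1))) +
      π / Real.sqrt 8 * Real.arccos (1 - 2*x)⁻¹ := by
    funext x; simp only [F, arcsec]; ring
  rw [hFG]
  have hA : HasDerivAt (fun x : ℝ => 3 - 4*(x*(x-1))) (-(4*(2*ρ-1))) ρ :=
    (hu'.const_mul 4).const_sub 3
  have hB : HasDerivAt (fun x : ℝ => Real.sqrt (x*(x-1))) (1/(2*s) * (2*ρ-1)) ρ :=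
    (Real.hasDerivAt_sqrt hu.ne').comp ρ hu'
  have hlin : HasDerivAt (fun x : ℝ => 1 - 2*x) (-2) ρ := by
    have h := ((hasDerivAt_id ρ).const_mul 2).const_sub 1
    simp only [id_eq] at h
    exact h.congr_deriv (by ring)
  have hw := hlin.inv hvne
  have harc := (Real.hasDerivAt_arccos hw1 hw2).comp ρ hw
  have htot := ((hA.mul hB).const_mul (π / Real.sqrt 18)).add
    (harc.const_mul (π / Real.sqrt 8))
  refine htot.congr_deriv ?_
  symm
  rw [hsw, sqrt18', sqrt8', ← hs_def]
  have h2 : Real.sqrt 2 ^ 2 = 2 := Real.sq_sqrt (by norm_num)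
  have h2pos : (0:ℝ) < Real.sqrt 2 := Real.sqrt_pos.mpr (by norm_num)
  rw [← hs2]
  clear_value s
  rw [show (1 - 2*ρ) = -(2*ρ-1) by ring]
  field_simp
  linear_combination (-24*s^4) * h2 + (4*(3-12*s^2)) * hs2

/-- `F` is strictly decreasing on `[1, ∞)`, `F(1) = π²/(2√2)`, and `F(ρ) → −∞` as `ρ → ∞`. -/
theorem stmt_3 :
    StrictAntiOn F (Set.Ici 1) ∧ F 1 = π ^ 2 / (2 * Real.sqrt 2) ∧
      Tendsto F atTop atBot := by
  refine ⟨?_, ?_, ?_⟩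
  · apply strictAntiOn_of_deriv_neg (convex_Ici 1)
    · apply ContinuousOn.add
      · exact (((continuous_const).mul (by continuity)).mul
          (Real.continuous_sqrt.comp (by continuity))).continuousOn
      · apply ContinuousOn.mul continuousOn_const
        have : ContinuousOn (fun x : ℝ => (1 - 2*x)⁻¹) (Set.Ici 1) := by
          apply ContinuousOn.inv₀ (Continuous.continuousOn (by continuity))
          intro x hx
          simp only [Set.mem_Ici] at hx
          intro h; nlinarith
        exact Real.continuous_arccos.comp_continuousOn this
    · intro x hx
      rw [interior_Ici] at hx
      have hx1 : 1 < x := hx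
      rw [(F_deriv' x hx1).deriv]
      have hu : 0 < x * (x - 1) := by nlinarith
      have hs : 0 < Real.sqrt (x*(x-1)) := Real.sqrt_pos.mpr hu
      have : 0 < 4 * Real.sqrt 2 * π * Real.sqrt (x*(x-1)) ^ 3 / (2*x-1) := by
        apply div_pos (by positivity) (by linarith)
      linarith
  · have h : ((1:ℝ) - 2)⁻¹ = -1 := by norm_num
    simp [F, arcsec, sqrt8']
    rw [h, Real.arccos_neg_one]
    ring
  · have hu_top : Tendsto (fun ρ:ℝ => ρ*(ρ-1)) atTop atTop := by
      apply tendsto_atTop_mono (f := fun ρ:ℝ => ρ - 1)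
      · intro x; nlinarith [sq_nonneg (x-1)]
      · exact tendsto_atTop_add_const_right _ _ tendsto_id
    have h3 : Tendsto (fun ρ:ℝ => 3 - 4*(ρ*(ρ-1))) atTop atBot := by
      have h := (hu_top.const_mul_atTop (show (0:ℝ) < 4 by norm_num))
      have h2 := tendsto_atBot_add_const_left atTop (3:ℝ) (tendsto_neg_atTop_atBot.comp h)
      exact h2.congr (fun x => by simp [sub_eq_add_neg])
    have hsqrt : Tendsto Real.sqrt atTop atTop := by
      apply tendsto_atTop_atTop.mpr
      intro b
      refine ⟨b^2, fun x hx => ?_⟩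
      calc b ≤ |b| := le_abs_self b
      _ = Real.sqrt (b^2) := (Real.sqrt_sq_eq_abs b).symm
      _ ≤ Real.sqrt x := Real.sqrt_le_sqrt hx
    have hsq : Tendsto (fun ρ:ℝ => Real.sqrt (ρ*(ρ-1))) atTop atTop :=
      hsqrt.comp hu_top
    have hmul := h3.atBot_mul_atTop₀ hsq
    have hcm := hmul.const_mul_atBot (show (0:ℝ) < π / Real.sqrt 18 by positivity)
    have hfin := tendsto_atBot_add_const_right atTop (π / Real.sqrt 8 * π) hcm
    apply tendsto_atBot_mono _ hfin
    intro x
    have hc : (0:ℝ) ≤ π / Real.sqrt 8 := by positivity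
    simp only [F, arcsec]
    have := mul_le_mul_of_nonneg_left (Real.arccos_le_pi (1 - 2*x)⁻¹) hc
    nlinarith [this]
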